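/- Let G be a nondiscrete, σ-compact, locally compact Hausdorff group with left Haar measure μ. Then for every ε > 0 there exists a dense open set E ⊆ G with μ(E) ≤ ε. -/

import Mathlib

open MeasureTheory
open scoped Pointwise

/-- In a nondiscrete locally compact Hausdorff group, every Haar measure admits open
neighborhoods of `1` of arbitrarily small measure. -/
theorem statement19_aux_small {G : Type*} [Group G] [TopologicalSpace G] [IsTopologicalGroup G]
    [LocallyCompactSpace G] [T2Space G]
    [MeasurableSpace G] [BorelSpace G]
    (μ : Measure G) [μ.IsHaarMeasure]
    (hnd : ¬ DiscreteTopology G) (δ : ENNReal) (hδ : δ ≠ 0) :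
    ∃ W : Set G, IsOpen W ∧ (1 : G) ∈ W ∧ μ W ≤ δ := by
  have hne : (nhdsWithin (1 : G) {(1:G)}ᶜ).NeBot := by
    rw [Filter.neBot_iff]
    intro h
    exact hnd (discreteTopology_of_isOpen_singleton_one
      ((isOpen_singleton_iff_punctured_nhds (1:G)).2 h))
  have : Nonempty G := ⟨1⟩
  set ν : Measure G := Measure.haar with hν
  have hνatoms : NullSingletonClass ν := inferInstance
  set c : ENNReal := (Measure.haarScalarFactor μ ν : ENNReal) with hc
  have hc_top : c + 1 ≠ ⊤ := by simp [hc]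
  have hc0 : c + 1 ≠ 0 := by simp
  have hδ' : (0:ENNReal) < δ / (c+1) := ENNReal.div_pos hδ hc_top
  have h1 : ν {(1:G)} = 0 := measure_singleton 1
  obtain ⟨W, hW1, hWopen, hWlt⟩ :=
    Set.exists_isOpen_lt_of_lt (μ := ν) ({(1:G)} : Set G) (δ / (c+1)) (by rw [h1]; exact hδ')
  refine ⟨W, hWopen, hW1 rfl, ?_⟩
  have := Measure.measure_isHaarMeasure_eq_smul_of_isOpen μ ν hWopen
  rw [this]
  calc (Measure.haarScalarFactor μ ν : ENNReal) • ν W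
      = c * ν W := rfl
    _ ≤ (c+1) * (δ / (c+1)) := by
        exact mul_le_mul' (le_add_right le_rfl) hWlt.le
    _ = δ := ENNReal.mul_div_cancel hc0 hc_top

/-- Refinement step: inside any open neighborhood of `1` we find a symmetric open
neighborhood with compact closure contained in it, of small measure. -/
theorem statement19_aux_step {G : Type*} [Group G] [TopologicalSpace G] [IsTopologicalGroup G]
    [LocallyCompactSpace G] [T2Space G]
    [MeasurableSpace G] [BorelSpace G]
    (μ : Measure G) [μ.IsHaarMeasure]
    (hnd : ¬ DiscreteTopology G) (U : Set G) (hU : IsOpen U) (h1U : (1:G) ∈ U)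
    (δ : ENNReal) (hδ : δ ≠ 0) :
    ∃ V : Set G, IsOpen V ∧ (1:G) ∈ V ∧ V⁻¹ = V ∧ IsCompact (closure V) ∧
      closure V ⊆ U ∧ μ V ≤ δ := by
  obtain ⟨W, hWopen, hW1, hWμ⟩ := statement19_aux_small μ hnd δ hδ
  obtain ⟨K, hKcomp, hK1, hKsub⟩ := exists_compact_subset (hU.inter hWopen) ⟨h1U, hW1⟩
  refine ⟨interior K ∩ (interior K)⁻¹, (isOpen_interior.inter isOpen_interior.inv),
    ⟨hK1, by simpa using hK1⟩, by simp [Set.inter_inv, Set.inter_comm], ?_, ?_, ?_⟩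
  · exact hKcomp.of_isClosed_subset isClosed_closure
      ((closure_mono (Set.inter_subset_left)).trans
        (closure_minimal interior_subset hKcomp.isClosed))
  · intro x hx
    have : x ∈ closure (interior K) :=
      closure_mono (Set.inter_subset_left) hx
    exact (hKsub ((closure_minimal interior_subset hKcomp.isClosed) this)).1
  · refine le_trans (measure_mono ?_) hWμ
    exact fun x hx => (hKsub (interior_subset hx.1)).2

/-- In a nondiscrete σ-compact locally compact Hausdorff group with
left Haar measure `μ`, for every `ε > 0` there is a dense open set of measure at most
`ε`. -/
theorem statement19 {G : Type*} [Group G] [TopologicalSpace G] [IsTopologicalGroup G]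
    [LocallyCompactSpace G] [T2Space G] [SigmaCompactSpace G]
    [MeasurableSpace G] [BorelSpace G]
    (μ : Measure G) [μ.IsHaarMeasure]
    (hnd : ¬ DiscreteTopology G)
    (ε : ℝ) (hε : 0 < ε) :
    ∃ E : Set G, IsOpen E ∧ Dense E ∧ μ E ≤ ENNReal.ofReal ε := by
  classical
  set c : ℕ → ENNReal := fun n => ENNReal.ofReal ε * (2⁻¹ : ENNReal) ^ (n + 1) with hc
  have hc0 : ∀ n, c n ≠ 0 := by
    intro n
    simp only [hc, mul_ne_zero_iff]
    constructor
    · simpa using hε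
    · exact pow_ne_zero _ (ENNReal.inv_ne_zero.2 ENNReal.ofNat_ne_top)
  -- property of the sets in our decreasing sequence
  set Q : ℕ → Set G → Prop := fun n V =>
    IsOpen V ∧ (1:G) ∈ V ∧ V⁻¹ = V ∧ IsCompact (closure V) ∧ μ V ≤ c n with hQdef
  have base : ∃ V, Q 0 V := by
    obtain ⟨V, h1, h2, h3, h4, _, h6⟩ :=
      statement19_aux_step μ hnd Set.univ isOpen_univ (Set.mem_univ _) (c 0) (hc0 0)
    exact ⟨V, h1, h2, h3, h4, h6⟩
  have step : ∀ n (V : Set G), Q n V → ∃ V', Q (n+1) V' ∧ closure V' ⊆ V := by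
    intro n V hV
    obtain ⟨V', h1, h2, h3, h4, h5, h6⟩ :=
      statement19_aux_step μ hnd V hV.1 hV.2.1 (c (n+1)) (hc0 (n+1))
    exact ⟨V', ⟨h1, h2, h3, h4, h6⟩, h5⟩
  choose! next hnextQ hnextcl using step
  obtain ⟨U0, hU0⟩ := base
  set U : ℕ → Set G := fun n => Nat.rec U0 (fun n Un => next n Un) n with hUdef
  have hUsucc : ∀ n, U (n+1) = next n (U n) := fun n => rfl
  have hQ : ∀ n, Q n (U n) := by
    intro n
    induction n with
    | zero => exact hU0
    | succ n ih => rw [hUsucc]; exact hnextQ n (U n) ih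
  have hcl : ∀ n, closure (U (n+1)) ⊆ U n := by
    intro n; rw [hUsucc]; exact hnextcl n (U n) (hQ n)
  -- the compact "kernel"
  set N : Set G := ⋂ n, closure (U n) with hN
  have hNsub : ∀ n, N ⊆ U n := fun n =>
    (Set.iInter_subset _ (n+1)).trans (hcl n)
  have hNinv : ∀ x, x ∈ N → x⁻¹ ∈ N := by
    intro x hx
    refine Set.mem_iInter.2 fun n => ?_
    have hxn : x ∈ closure (U n) := Set.mem_iInter.1 hx n
    have : x ∈ closure ((U n)⁻¹) := by rw [(hQ n).2.2.1]; exact hxn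
    rw [← inv_closure] at this
    exact Set.mem_inv.1 this
  -- the sequence forms a neighborhood base of N
  have hbase : ∀ O : Set G, IsOpen O → N ⊆ O → ∃ m, closure (U m) ⊆ O := by
    intro O hO hNO
    by_contra h
    push_neg at h
    have hne : ∀ m, (closure (U m) ∩ Oᶜ).Nonempty := by
      intro m
      obtain ⟨x, hx1, hx2⟩ := Set.not_subset.1 (h m)
      exact ⟨x, hx1, hx2⟩
    have hsub : ∀ m, closure (U (m+1)) ∩ Oᶜ ⊆ closure (U m) ∩ Oᶜ := by
      intro m
      exact Set.inter_subset_inter_left _ ((hcl m).trans subset_closure)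
    have := IsCompact.nonempty_iInter_of_sequence_nonempty_isCompact_isClosed
      (fun m => closure (U m) ∩ Oᶜ) hsub hne
      ((hQ 0).2.2.2.1.inter_right hO.isClosed_compl)
      (fun m => isClosed_closure.inter hO.isClosed_compl)
    obtain ⟨x, hx⟩ := this
    rw [← Set.iInter_inter] at hx
    exact hx.2 (hNO hx.1)
  -- countable covering points
  have hcover : ∀ n m : ℕ, ∃ t : Finset G,
      compactCovering G n ⊆ ⋃ x ∈ t, x • U m := by
    intro n m
    apply (isCompact_compactCovering G n).elim_finite_subcover (fun x : G => x • U m)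
      (fun x => (hQ m).1.smul x)
    intro y _
    exact Set.mem_iUnion.2 ⟨y, by
      simpa using Set.smul_mem_smul_set (a := y) (hQ m).2.1⟩
  choose t ht using hcover
  set D : Set G := insert 1 (⋃ n, ⋃ m, (t n m : Set G)) with hD
  have hDcount : D.Countable :=
    (Set.countable_iUnion fun n =>
      Set.countable_iUnion fun m => (t n m).countable_toSet).insert 1
  obtain ⟨f, hf⟩ := hDcount.exists_eq_range ⟨1, Set.mem_insert _ _⟩
  -- the dense open set
  refine ⟨⋃ k, f k • U k, isOpen_iUnion fun k => (hQ k).1.smul _, ?_, ?_⟩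
  · -- density
    rw [dense_iff_inter_open]
    rintro Uo hUo ⟨g, hg⟩
    set O : Set G := (g⁻¹ • Uo) * N with hO
    have hOopen : IsOpen O := (hUo.smul g⁻¹).mul_right
    have hNO : N ⊆ O := by
      intro ν hν
      have h1 : (1:G) ∈ g⁻¹ • Uo := ⟨g, hg, by simp⟩
      simpa using Set.mul_mem_mul h1 hν
    obtain ⟨m, hm⟩ := hbase O hOopen hNO
    obtain ⟨n, hgn⟩ : ∃ n, g ∈ compactCovering G n := by
      have : g ∈ ⋃ n, compactCovering G n := by
        rw [iUnion_compactCovering]; trivial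
      exact Set.mem_iUnion.1 this
    obtain ⟨x, hxt, hgx⟩ : ∃ x ∈ t n m, g ∈ x • U m := by
      have := ht n m hgn
      simpa using this
    obtain ⟨u, hu, hgu⟩ := hgx
    have hgu' : x * u = g := hgu
    -- u⁻¹ is in U m, hence in O, hence x = g * u⁻¹ lies in Uo * N
    have hu' : u⁻¹ ∈ U m := by
      rw [← (hQ m).2.2.1]; exact Set.inv_mem_inv.2 hu
    have huO : u⁻¹ ∈ O := hm (subset_closure hu')
    rw [hO] at huO
    obtain ⟨z, hz, ν, hν, hzv⟩ := huO
    obtain ⟨w, hw, hwz⟩ := hz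
    -- so u⁻¹ = (g⁻¹ * w) * ν with w ∈ Uo, ν ∈ N
    have hxw : x = w * ν := by
      have h1 : x = g * u⁻¹ := by
        rw [← hgu']; group
      have h2 : (g⁻¹ * w) * ν = u⁻¹ := by
        rw [← hzv, ← hwz]; rfl
      rw [h1, ← h2]; group
    have hwv : w * ν = x := hxw.symm
    -- w = x * ν⁻¹ belongs to x • U k for f k = x
    have hxD : x ∈ D := by
      rw [hD]
      exact Set.mem_insert_iff.2 (Or.inr (Set.mem_iUnion.2 ⟨n, Set.mem_iUnion.2 ⟨m, hxt⟩⟩))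
    obtain ⟨k, hk⟩ : ∃ k, f k = x := by
      rw [hf] at hxD; exact hxD
    refine ⟨w, hw, Set.mem_iUnion.2 ⟨k, ?_⟩⟩
    rw [hk]
    refine ⟨ν⁻¹, hNsub k (hNinv ν hν), ?_⟩
    show x * ν⁻¹ = w
    rw [hxw]; group
  · -- measure estimate
    refine le_trans (measure_iUnion_le _) ?_
    have heach : ∀ k, μ (f k • U k) ≤ c k := by
      intro k
      rw [measure_smul]
      exact (hQ k).2.2.2.2
    refine le_trans (ENNReal.tsum_le_tsum heach) ?_
    rw [hc]
    have : ∑' k : ℕ, ENNReal.ofReal ε * (2⁻¹:ENNReal) ^ (k+1)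
        = ENNReal.ofReal ε * ∑' k : ℕ, (2⁻¹:ENNReal) ^ (k+1) := ENNReal.tsum_mul_left
    rw [this]
    have hgeom : ∑' k : ℕ, (2⁻¹:ENNReal) ^ (k+1) = 1 := by
      have h1 : ∀ k : ℕ, (2⁻¹:ENNReal) ^ (k+1) = (2⁻¹:ENNReal) ^ k * 2⁻¹ :=
        fun k => pow_succ _ _
      rw [tsum_congr h1, ENNReal.tsum_mul_right, ENNReal.tsum_geometric,
        ENNReal.one_sub_inv_two, inv_inv]
      exact ENNReal.mul_inv_cancel two_ne_zero ENNReal.ofNat_ne_top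
    rw [hgeom, mul_one]
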